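/- Let k be an algebraically closed field of characteristic 0 and let p₁,…,p₅ be five distinct points of ℙ²(k) with no three of them collinear. Then for every integer m ≥ 1, the least degree of a nonzero homogeneous form f ∈ k[x₀,x₁,x₂] with f ∈ ⋂ᵢ I(pᵢ)ᵐ is exactly 2m. That is: there exists a nonzero homogeneous form of degree 2m lying in ⋂ᵢ I(pᵢ)ᵐ, and every nonzero homogeneous form lying in ⋂ᵢ I(pᵢ)ᵐ has degree at least 2m. -/

import Mathlib

open MvPolynomial

/-- The homogeneous prime ideal of the point `p ∈ ℙ²(k)`: the ideal generated by all
forms (homogeneous polynomials) vanishing at `p`. -/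
noncomputable def pointIdeal {k : Type*} [Field k]
    (p : Projectivization k (Fin 3 → k)) : Ideal (MvPolynomial (Fin 3) k) :=
  Ideal.span { f : MvPolynomial (Fin 3) k |
    (∃ d : ℕ, f.IsHomogeneous d) ∧ eval p.rep f = 0 }

namespace FiveGen

variable {k : Type*} [Field k]

lemma weight_one_eq (s : Fin 3 →₀ ℕ) :
    (Finsupp.weight (1 : Fin 3 → ℕ)) s = s 0 + s 1 + s 2 := by
  rw [Finsupp.weight_apply, Finsupp.sum_fintype _ _ (fun _ => by simp), Fin.sum_univ_three]
  simp

lemma isHomog_iff {h : MvPolynomial (Fin 3) k} {d : ℕ} :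
    h.IsHomogeneous d ↔ ∀ s : Fin 3 →₀ ℕ, coeff s h ≠ 0 → s 0 + s 1 + s 2 = d := by
  constructor
  · intro H s hs
    rw [← weight_one_eq s]
    exact H hs
  · intro H s hs
    rw [weight_one_eq s]
    exact H s hs

lemma eval_aeval (g : Fin 3 → MvPolynomial (Fin 3) k) (u : Fin 3 → k)
    (f : MvPolynomial (Fin 3) k) :
    eval u (aeval g f) = eval (fun l => eval u (g l)) f := by
  induction f using MvPolynomial.induction_on with
  | C a => simp
  | add p q hp hq => simp only [map_add, hp, hq]
  | mul_X p n hp => simp only [map_mul, aeval_X, eval_X, hp]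

/-- The ideal of polynomials all of whose monomials have `w`-weight at least `a`. -/
def KIdeal (w : Fin 3 → ℕ) (a : ℕ) : Ideal (MvPolynomial (Fin 3) k) where
  carrier := {h | ∀ s ∈ h.support, a ≤ ∑ l, w l * s l}
  zero_mem' := by simp
  add_mem' := by
    intro p q hp hq s hs
    rcases Finset.mem_union.1 (MvPolynomial.support_add hs) with h | h
    · exact hp s h
    · exact hq s h
  smul_mem' := by
    intro c x hx s hs
    rw [smul_eq_mul] at hs
    obtain ⟨s1, hs1, s2, hs2, rfl⟩ := Finset.mem_add.1 (MvPolynomial.support_mul c x hs)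
    calc a ≤ ∑ l, w l * s2 l := hx s2 hs2
    _ ≤ ∑ l, w l * (s1 + s2) l := by
        refine Finset.sum_le_sum (fun l _ => ?_)
        have : s2 l ≤ (s1 + s2) l := by simp
        exact Nat.mul_le_mul_left _ this

lemma mem_KIdeal_iff {w : Fin 3 → ℕ} {a : ℕ} {h : MvPolynomial (Fin 3) k} :
    h ∈ KIdeal w a ↔ ∀ s ∈ h.support, a ≤ ∑ l, w l * s l := Iff.rfl

lemma mul_mem_KIdeal {w : Fin 3 → ℕ} {a b : ℕ} {p q : MvPolynomial (Fin 3) k}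
    (hp : p ∈ KIdeal w a) (hq : q ∈ KIdeal w b) : p * q ∈ KIdeal w (a + b) := by
  intro s hs
  obtain ⟨s1, hs1, s2, hs2, rfl⟩ := Finset.mem_add.1 (MvPolynomial.support_mul p q hs)
  have h1 := hp s1 hs1
  have h2 := hq s2 hs2
  have : ∑ l, w l * (s1 + s2) l = (∑ l, w l * s1 l) + ∑ l, w l * s2 l := by
    rw [← Finset.sum_add_distrib]
    refine Finset.sum_congr rfl (fun l _ => ?_)
    simp [Nat.mul_add]
  omega

lemma pow_le_KIdeal {w : Fin 3 → ℕ} {J : Ideal (MvPolynomial (Fin 3) k)}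
    (hJ : J ≤ KIdeal w 1) (a : ℕ) : J ^ a ≤ KIdeal w a := by
  induction a with
  | zero => intro h _ s hs; exact Nat.zero_le _
  | succ a ih =>
    rw [pow_succ]
    exact Ideal.mul_le.2 fun r hr s hs => mul_mem_KIdeal (ih hr) (hJ hs)

lemma KIdeal_le_span_pow {a : ℕ} {h : MvPolynomial (Fin 3) k}
    (hh : ∀ s ∈ h.support, a ≤ s 1 + s 2) :
    h ∈ (Ideal.span {X 1, X 2} : Ideal (MvPolynomial (Fin 3) k)) ^ a := by
  have hX1 : (X 1 : MvPolynomial (Fin 3) k) ∈ Ideal.span {X 1, X 2} :=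
    Ideal.subset_span (by simp)
  have hX2 : (X 2 : MvPolynomial (Fin 3) k) ∈ Ideal.span {X 1, X 2} :=
    Ideal.subset_span (by simp)
  rw [h.as_sum]
  refine Ideal.sum_mem _ (fun s hs => ?_)
  have key : (monomial s (coeff s h) : MvPolynomial (Fin 3) k)
      = (C (coeff s h) * X 0 ^ s 0) * (X 1 ^ s 1 * X 2 ^ s 2) := by
    rw [monomial_eq, Finsupp.prod_pow, Fin.prod_univ_three]
    ring
  rw [key]
  have h1 : (X 1 ^ s 1 * X 2 ^ s 2 : MvPolynomial (Fin 3) k)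
      ∈ (Ideal.span {X 1, X 2} : Ideal (MvPolynomial (Fin 3) k)) ^ (s 1 + s 2) := by
    rw [pow_add]
    exact Ideal.mul_mem_mul (Ideal.pow_mem_pow hX1 _) (Ideal.pow_mem_pow hX2 _)
  exact Ideal.mul_mem_left _ _ (Ideal.pow_le_pow_right (hh s hs) h1)

lemma eval_single_homog {h : MvPolynomial (Fin 3) k} {d : ℕ}
    (hh : h.IsHomogeneous d) (i0 : Fin 3) :
    eval (Pi.single i0 1) h = coeff (Finsupp.single i0 d) h := by
  rw [eval_eq']
  rw [Finset.sum_eq_single (Finsupp.single i0 d)]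
  · have : ∀ l : Fin 3, (Pi.single i0 1 : Fin 3 → k) l ^ (Finsupp.single i0 d) l = 1 := by
      intro l
      by_cases hl : l = i0
      · subst hl; simp
      · rw [Finsupp.single_eq_of_ne' (Ne.symm hl), pow_zero]
    rw [Finset.prod_congr rfl (fun l _ => this l)]
    simp
  · intro b hb hbne
    by_cases hex : ∃ l, l ≠ i0 ∧ b l ≠ 0
    · obtain ⟨l, hl, hbl⟩ := hex
      have hz : (Pi.single i0 1 : Fin 3 → k) l ^ b l = 0 := by
        rw [Pi.single_eq_of_ne hl, zero_pow hbl]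
      exact mul_eq_zero_of_right _ (Finset.prod_eq_zero (Finset.mem_univ l) hz)
    · push_neg at hex
      exfalso
      apply hbne
      have hb0 : b = Finsupp.single i0 (b i0) := by
        ext l
        by_cases hl : l = i0
        · subst hl; simp
        · rw [Finsupp.single_eq_of_ne' (Ne.symm hl)]
          exact hex l hl
      have hsum := isHomog_iff.1 hh b (MvPolynomial.mem_support_iff.1 hb)
      have hval : b 0 + b 1 + b 2 = b i0 := by
        conv_lhs => rw [hb0]
        fin_cases i0 <;> simp [Finsupp.single_apply]
      rw [hb0, hval.symm.trans hsum]
  · intro hns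
    rw [MvPolynomial.notMem_support_iff.1 hns, zero_mul]



/-- Substitution of variables by the linear forms given by the rows of `M`. -/
noncomputable def subst (M : Matrix (Fin 3) (Fin 3) k) :
    MvPolynomial (Fin 3) k →ₐ[k] MvPolynomial (Fin 3) k :=
  aeval (fun l => ∑ j, M l j • X j)

lemma eval_subst (M : Matrix (Fin 3) (Fin 3) k) (u : Fin 3 → k) (f : MvPolynomial (Fin 3) k) :
    eval u (subst M f) = eval (M.mulVec u) f := by
  rw [subst, eval_aeval]
  have hvec : (fun l => eval u (∑ j, M l j • X j : MvPolynomial (Fin 3) k)) = M.mulVec u := by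
    funext l
    simp [Matrix.mulVec, dotProduct, smul_eq_C_mul]
  rw [hvec]

lemma subst_homog (M : Matrix (Fin 3) (Fin 3) k) {f : MvPolynomial (Fin 3) k} {d : ℕ}
    (hf : f.IsHomogeneous d) : (subst M f).IsHomogeneous d := by
  have hg : ∀ l, (∑ j, M l j • X j : MvPolynomial (Fin 3) k).IsHomogeneous 1 := by
    intro l
    refine MvPolynomial.IsHomogeneous.sum _ _ _ (fun j _ => ?_)
    rw [smul_eq_C_mul]
    exact isHomogeneous_C_mul_X _ _
  have := hf.aeval _ hg
  rw [one_mul] at this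
  exact this

lemma subst_subst (M N : Matrix (Fin 3) (Fin 3) k) [Infinite k]
    (hMN : ∀ u : Fin 3 → k, M.mulVec (N.mulVec u) = u) (f : MvPolynomial (Fin 3) k) :
    subst N (subst M f) = f := by
  apply MvPolynomial.funext
  intro u
  rw [eval_subst, eval_subst, hMN]

/-- weight vector that is `0` at `i0` and `1` elsewhere -/
def wI (i0 : Fin 3) : Fin 3 → ℕ := fun l => if l = i0 then 0 else 1

lemma sum_wI_zero (s : Fin 3 →₀ ℕ) : ∑ l, wI 0 l * s l = s 1 + s 2 := by
  rw [Fin.sum_univ_three]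
  simp [wI]

lemma sum_wI_one (s : Fin 3 →₀ ℕ) : ∑ l, wI 1 l * s l = s 0 + s 2 := by
  rw [Fin.sum_univ_three]
  simp [wI]

lemma mem_K_of_homog {h : MvPolynomial (Fin 3) k} {d : ℕ} {i0 : Fin 3}
    (hh : h.IsHomogeneous d) (h0 : eval (Pi.single i0 1) h = 0) :
    h ∈ KIdeal (wI i0) 1 := by
  intro s hs
  by_contra hlt
  push_neg at hlt
  interval_cases h' : (∑ l, wI i0 l * s l)
  have hz : ∀ l, l ≠ i0 → s l = 0 := by
    intro l hl
    have h2 := Finset.sum_eq_zero_iff.1 h' l (Finset.mem_univ l)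
    simpa [wI, hl] using h2
  have hb0 : s = Finsupp.single i0 (s i0) := by
    ext l
    by_cases hl : l = i0
    · subst hl; simp
    · rw [Finsupp.single_eq_of_ne' (Ne.symm hl)]
      exact hz l hl
  have hsum := isHomog_iff.1 hh s (MvPolynomial.mem_support_iff.1 hs)
  have hval : s 0 + s 1 + s 2 = s i0 := by
    conv_lhs => rw [hb0]
    fin_cases i0 <;> simp [Finsupp.single_apply]
  have hsd : s = Finsupp.single i0 d := by rw [hb0, hval.symm.trans hsum]
  rw [eval_single_homog hh i0] at h0
  exact (MvPolynomial.mem_support_iff.1 hs) (by rw [hsd, h0])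

/-- Mapping a power of the point ideal into a weight-support condition. -/
lemma subst_mem_K (M : Matrix (Fin 3) (Fin 3) k) (q : Projectivization k (Fin 3 → k))
    (i0 : Fin 3) (hM : M.mulVec (Pi.single i0 1) = q.rep) {f : MvPolynomial (Fin 3) k} {a : ℕ}
    (hf : f ∈ pointIdeal q ^ a) :
    ∀ s ∈ (subst M f).support, a ≤ ∑ l, wI i0 l * s l := by
  have h1 : Ideal.map (subst M) (pointIdeal q) ≤ KIdeal (wI i0) 1 := by
    rw [pointIdeal, Ideal.map_span, Ideal.span_le]
    rintro g ⟨h, ⟨⟨dh, hdh⟩, hvan⟩, rfl⟩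
    refine mem_K_of_homog (subst_homog M hdh) ?_
    rw [eval_subst, hM, hvan]
  have h2 : subst M f ∈ Ideal.map (subst M) (pointIdeal q) ^ a := by
    rw [← Ideal.map_pow]
    exact Ideal.mem_map_of_mem _ hf
  exact pow_le_KIdeal h1 a h2

lemma exists_snoc {n : ℕ} (hn : n < 3) (v : Fin n → (Fin 3 → k))
    (hv : LinearIndependent k v) : ∃ x, LinearIndependent k (Fin.snoc v x) := by
  have hne : Submodule.span k (Set.range v) ≠ ⊤ := by
    intro hT
    have h1 := finrank_span_eq_card hv
    rw [hT, finrank_top, Module.finrank_fintype_fun_eq_card] at h1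
    simp at h1
    omega
  obtain ⟨x, hx⟩ : ∃ x, x ∉ Submodule.span k (Set.range v) := by
    by_contra hall
    push_neg at hall
    exact hne (Submodule.eq_top_iff'.2 hall)
  exact ⟨x, linearIndependent_fin_snoc.2 ⟨hv, hx⟩⟩

lemma exists_frame {v w : Fin 3 → k} (h : LinearIndependent k ![v, w]) :
    ∃ M N : Matrix (Fin 3) (Fin 3) k,
      (∀ u, M.mulVec (N.mulVec u) = u) ∧ (∀ u, N.mulVec (M.mulVec u) = u) ∧
      M.mulVec (Pi.single 0 1) = v ∧ M.mulVec (Pi.single 1 1) = w := by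
  obtain ⟨x, hx⟩ := exists_snoc (by omega) ![v, w] h
  have htr : LinearIndependent k ![v, w, x] := by
    have : ![v, w, x] = Fin.snoc ![v, w] x := by
      funext i
      match i with
      | 0 => rfl
      | 1 => rfl
      | 2 => rfl
    rwa [this]
  have hcard : Fintype.card (Fin 3) = Module.finrank k (Fin 3 → k) := by
    simp [Module.finrank_fintype_fun_eq_card]
  let b : Module.Basis (Fin 3) k (Fin 3 → k) := basisOfLinearIndependentOfCardEqFinrank htr hcard
  have hb : ∀ i, b i = ![v, w, x] i := fun i => by
    rw [coe_basisOfLinearIndependentOfCardEqFinrank]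
  let A : (Fin 3 → k) ≃ₗ[k] (Fin 3 → k) := (Pi.basisFun k (Fin 3)).equiv b (Equiv.refl _)
  have hA : ∀ i : Fin 3, A (Pi.single i 1) = b i := by
    intro i
    have h1 : (Pi.basisFun k (Fin 3)) i = Pi.single i 1 := Pi.basisFun_apply k (Fin 3) i
    rw [← h1]
    exact Module.Basis.equiv_apply _ i b _
  refine ⟨LinearMap.toMatrix' (A : (Fin 3 → k) →ₗ[k] (Fin 3 → k)),
          LinearMap.toMatrix' (A.symm : (Fin 3 → k) →ₗ[k] (Fin 3 → k)), ?_, ?_, ?_, ?_⟩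
  · intro u
    rw [← Matrix.toLin'_apply, Matrix.toLin'_toMatrix', ← Matrix.toLin'_apply,
      Matrix.toLin'_toMatrix']
    simp
  · intro u
    rw [← Matrix.toLin'_apply, Matrix.toLin'_toMatrix', ← Matrix.toLin'_apply,
      Matrix.toLin'_toMatrix']
    simp
  · rw [← Matrix.toLin'_apply, Matrix.toLin'_toMatrix']
    rw [show (A : (Fin 3 → k) →ₗ[k] (Fin 3 → k)) (Pi.single 0 1) = A (Pi.single 0 1) from rfl,
      hA 0, hb 0]
    rfl
  · rw [← Matrix.toLin'_apply, Matrix.toLin'_toMatrix']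
    rw [show (A : (Fin 3 → k) →ₗ[k] (Fin 3 → k)) (Pi.single 1 1) = A (Pi.single 1 1) from rfl,
      hA 1, hb 1]
    rfl

lemma exists_frame_point (v : Fin 3 → k) (hv : v ≠ 0) :
    ∃ M N : Matrix (Fin 3) (Fin 3) k,
      (∀ u, M.mulVec (N.mulVec u) = u) ∧ (∀ u, N.mulVec (M.mulVec u) = u) ∧
      M.mulVec (Pi.single 0 1) = v := by
  have h1 : LinearIndependent k ![v] := by
    apply linearIndependent_unique_iff.2
    simpa using hv
  obtain ⟨x, hx⟩ := exists_snoc (by omega) ![v] h1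
  have h2 : LinearIndependent k ![v, x] := by
    have : ![v, x] = Fin.snoc ![v] x := by
      funext i
      match i with
      | 0 => rfl
      | 1 => rfl
    rwa [this]
  obtain ⟨M, N, hMN, hNM, hM0, _⟩ := exists_frame h2
  exact ⟨M, N, hMN, hNM, hM0⟩



lemma pointIdeal_le_ker (p : Projectivization k (Fin 3 → k)) {f : MvPolynomial (Fin 3) k}
    (hf : f ∈ pointIdeal p) : eval p.rep f = 0 := by
  have : pointIdeal p ≤ RingHom.ker (eval p.rep : MvPolynomial (Fin 3) k →+* k) := by
    rw [pointIdeal, Ideal.span_le]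
    rintro g ⟨-, hg⟩
    exact hg
  exact this hf

lemma pointIdeal_pow_char [Infinite k] (p : Projectivization k (Fin 3 → k))
    (M N : Matrix (Fin 3) (Fin 3) k)
    (hMN : ∀ u, M.mulVec (N.mulVec u) = u) (hNM : ∀ u, N.mulVec (M.mulVec u) = u)
    (hM0 : M.mulVec (Pi.single 0 1) = p.rep) (a : ℕ) (f : MvPolynomial (Fin 3) k) :
    f ∈ pointIdeal p ^ a ↔ ∀ s ∈ (subst M f).support, a ≤ s 1 + s 2 := by
  constructor
  · intro hf s hs
    have := subst_mem_K M p 0 hM0 hf s hs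
    rwa [sum_wI_zero] at this
  · intro hsupp
    have h1 : subst M f ∈ (Ideal.span {X 1, X 2} : Ideal (MvPolynomial (Fin 3) k)) ^ a :=
      KIdeal_le_span_pow hsupp
    have h2 : f = subst N (subst M f) := (subst_subst M N hMN f).symm
    have hNmem : ∀ i : Fin 3, i ≠ 0 → subst N (X i) ∈ pointIdeal p := by
      intro i hi
      apply Ideal.subset_span
      refine ⟨⟨1, subst_homog N (isHomogeneous_X _ _)⟩, ?_⟩
      rw [eval_subst, ← hM0, hNM, eval_X, Pi.single_eq_of_ne hi]
    have h3 : Ideal.map (subst N)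
        ((Ideal.span {X 1, X 2} : Ideal (MvPolynomial (Fin 3) k)) ^ a) ≤ pointIdeal p ^ a := by
      rw [Ideal.map_pow]
      refine Ideal.pow_right_mono ?_ a
      rw [Ideal.map_span, Set.image_insert_eq, Set.image_singleton, Ideal.span_le]
      rintro g hg
      rcases hg with rfl | rfl
      · exact hNmem 1 (by decide)
      · exact hNmem 2 (by decide)
    rw [h2]
    exact h3 (Ideal.mem_map_of_mem _ h1)

lemma subst_ne_zero [Infinite k] {M N : Matrix (Fin 3) (Fin 3) k}
    (hMN : ∀ u, M.mulVec (N.mulVec u) = u) {f : MvPolynomial (Fin 3) k} (hf : f ≠ 0) :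
    subst M f ≠ 0 := by
  intro h0
  apply hf
  have := subst_subst M N hMN f
  rw [h0, map_zero] at this
  exact this.symm

lemma degreeOf0_mul {p q : MvPolynomial (Fin 3) k} (hp : p ≠ 0) (hq : q ≠ 0) :
    degreeOf 0 (p * q) = degreeOf 0 p + degreeOf 0 q := by
  have hinj : ∀ r : MvPolynomial (Fin 3) k, r ≠ 0 → finSuccEquiv k 2 r ≠ 0 := by
    intro r hr h0
    exact hr ((finSuccEquiv k 2).injective (by rw [h0, map_zero]))
  rw [← natDegree_finSuccEquiv, ← natDegree_finSuccEquiv, ← natDegree_finSuccEquiv,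
    map_mul, Polynomial.natDegree_mul (hinj p hp) (hinj q hq)]

lemma mem_pow_iff_degreeOf [Infinite k] (p : Projectivization k (Fin 3 → k))
    {M N : Matrix (Fin 3) (Fin 3) k}
    (hMN : ∀ u, M.mulVec (N.mulVec u) = u) (hNM : ∀ u, N.mulVec (M.mulVec u) = u)
    (hM0 : M.mulVec (Pi.single 0 1) = p.rep) {f : MvPolynomial (Fin 3) k} {d : ℕ}
    (hf : f.IsHomogeneous d) (hf0 : f ≠ 0) (a : ℕ) :
    f ∈ pointIdeal p ^ a ↔ degreeOf 0 (subst M f) + a ≤ d := by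
  have hg0 : subst M f ≠ 0 := subst_ne_zero hMN hf0
  have hgh : (subst M f).IsHomogeneous d := subst_homog M hf
  have hne : (subst M f).support.Nonempty := by
    rwa [MvPolynomial.support_nonempty]
  rw [pointIdeal_pow_char p M N hMN hNM hM0]
  constructor
  · intro hsupp
    obtain ⟨s0, hs0⟩ := hne
    have had : a ≤ d := by
      have h1 := hsupp s0 hs0
      have h2 := isHomog_iff.1 hgh s0 (MvPolynomial.mem_support_iff.1 hs0)
      omega
    have : degreeOf 0 (subst M f) ≤ d - a := by
      rw [degreeOf_eq_sup]
      refine Finset.sup_le (fun s hs => ?_)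
      have h1 := hsupp s hs
      have h2 := isHomog_iff.1 hgh s (MvPolynomial.mem_support_iff.1 hs)
      omega
    omega
  · intro hdeg s hs
    have h1 : s 0 ≤ degreeOf 0 (subst M f) := by
      rw [degreeOf_eq_sup]
      exact Finset.le_sup (f := fun t => t 0) hs
    have h2 := isHomog_iff.1 hgh s (MvPolynomial.mem_support_iff.1 hs)
    omega

lemma supp_subst_col2 (M : Matrix (Fin 3) (Fin 3) k) (hM : ∀ l, M l 2 = 0)
    (f : MvPolynomial (Fin 3) k) : ∀ s ∈ (subst M f).support, s 2 = 0 := by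
  induction f using MvPolynomial.induction_on with
  | C c =>
    intro s hs
    have : subst M (C c) = C c := by simp [subst]
    rw [this] at hs
    rw [show (C c : MvPolynomial (Fin 3) k) = monomial 0 c from by simp] at hs
    have := MvPolynomial.support_monomial_subset hs
    simp only [Finset.mem_singleton] at this
    subst this
    rfl
  | add p q hp hq =>
    intro s hs
    rw [map_add] at hs
    rcases Finset.mem_union.1 (MvPolynomial.support_add hs) with h | h
    · exact hp s h
    · exact hq s h
  | mul_X q l hq =>
    intro s hs
    rw [map_mul] at hs
    obtain ⟨s1, hs1, s2, hs2, rfl⟩ := Finset.mem_add.1 (MvPolynomial.support_mul _ _ hs)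
    have h1 := hq s1 hs1
    have h2 : s2 2 = 0 := by
      have hXl : subst M (X l) = M l 0 • X 0 + M l 1 • X 1 := by
        have : subst M (X l) = ∑ j, M l j • X j := by simp [subst]
        rw [this, Fin.sum_univ_three, hM l]
        simp
      rw [hXl] at hs2
      rcases Finset.mem_union.1 (MvPolynomial.support_add hs2) with h | h
      · have h' := MvPolynomial.support_smul h
        rw [MvPolynomial.support_X] at h'
        have : s2 = Finsupp.single 0 1 := by simpa using h'
        simp [this]
      · have h' := MvPolynomial.support_smul h
        rw [MvPolynomial.support_X] at h'
        have : s2 = Finsupp.single 1 1 := by simpa using h'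
        simp [this]
    simp [h1, h2]

/-- The matrix for the substitution sending `X 2` to `0` and fixing `X 0, X 1`. -/
def Tmat : Matrix (Fin 3) (Fin 3) k :=
  Matrix.of fun l j => if l = j ∧ l ≠ 2 then 1 else 0

lemma Tmat_X (l : Fin 3) :
    subst (Tmat (k := k)) (X l) = if l = 2 then 0 else X l := by
  have : subst (Tmat (k := k)) (X l) = ∑ j, Tmat (k := k) l j • X j := by simp [subst]
  rw [this]
  fin_cases l <;> simp [Tmat, Fin.sum_univ_three]

lemma sub_Tmat_mem (g : MvPolynomial (Fin 3) k) :
    g - subst Tmat g ∈ Ideal.span {(X 2 : MvPolynomial (Fin 3) k)} := by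
  induction g using MvPolynomial.induction_on with
  | C c => simp [subst]
  | add p q hp hq =>
    rw [map_add]
    have : p + q - (subst Tmat p + subst Tmat q)
        = (p - subst Tmat p) + (q - subst Tmat q) := by ring
    rw [this]
    exact Ideal.add_mem _ hp hq
  | mul_X p l hp =>
    rw [map_mul, Tmat_X]
    by_cases hl : l = 2
    · subst hl
      rw [if_pos rfl, mul_zero, sub_zero]
      exact Ideal.mul_mem_left _ _ (Ideal.subset_span rfl)
    · rw [if_neg hl]
      have : p * X l - subst Tmat p * X l = (p - subst Tmat p) * X l := by ring
      rw [this]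
      exact Ideal.mul_mem_right _ _ hp

lemma Tmat_mulVec (u : Fin 3 → k) :
    (Tmat (k := k)).mulVec u = ![u 0, u 1, 0] := by
  funext l
  fin_cases l <;> simp [Tmat, Matrix.mulVec, dotProduct, Fin.sum_univ_three]



lemma rep_pair_indep {p q : Projectivization k (Fin 3 → k)} (h : p ≠ q) :
    LinearIndependent k ![p.rep, q.rep] := by
  rw [linearIndependent_fin2]
  constructor
  · simpa using q.rep_nonzero
  · intro c hceq
    simp only [Matrix.cons_val_one, Matrix.head_cons, Matrix.cons_val_zero] at hceq
    apply h
    have hc0 : c ≠ 0 := by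
      intro h0
      rw [h0, zero_smul] at hceq
      exact p.rep_nonzero hceq.symm
    rw [← p.mk_rep, ← q.mk_rep]
    rw [Projectivization.mk_eq_mk_iff]
    exact ⟨Units.mk0 c hc0, by simpa [Units.smul_def] using hceq⟩

lemma homog_zero_eq_C {f : MvPolynomial (Fin 3) k} (hf : f.IsHomogeneous 0) :
    f = C (coeff 0 f) := by
  ext s
  by_cases hs : s = 0
  · subst hs; simp
  · rw [MvPolynomial.coeff_C, if_neg (fun h => hs h.symm)]
    by_contra hne
    have h1 := isHomog_iff.1 hf s hne
    apply hs
    have e0 : s 0 = 0 := by omega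
    have e1 : s 1 = 0 := by omega
    have e2 : s 2 = 0 := by omega
    ext l
    match l with
    | 0 => exact e0
    | 1 => exact e1
    | 2 => exact e2

lemma key [Infinite k] (p : Fin 5 → Projectivization k (Fin 3 → k))
    (hp : Function.Injective p)
    (hgen : ∀ s : Finset (Fin 5), s.card = 3 →
      ¬ ∃ L : MvPolynomial (Fin 3) k, L ≠ 0 ∧ L.IsHomogeneous 1 ∧
        ∀ i ∈ s, eval (p i).rep L = 0) :
    ∀ d : ℕ, ∀ f : MvPolynomial (Fin 3) k, f ≠ 0 → f.IsHomogeneous d →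
      ∀ a : Fin 5 → ℕ, (∀ u, f ∈ pointIdeal (p u) ^ a u) →
      2 * (∑ u, a u) ≤ 5 * d := by
  intro d
  induction d using Nat.strong_induction_on with
  | _ d IH =>
  intro f hf0 hfh a hfa
  rcases Nat.eq_zero_or_pos d with rfl | hdpos
  · have hz : ∀ u, a u = 0 := by
      intro u
      by_contra hne
      have h1 : f ∈ pointIdeal (p u) := by
        have hle : pointIdeal (p u) ^ (a u) ≤ pointIdeal (p u) ^ 1 :=
          Ideal.pow_le_pow_right (by omega)
        simpa using hle (hfa u)
      have h2 := pointIdeal_le_ker (p u) h1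
      have h3 := homog_zero_eq_C hfh
      rw [h3] at h2
      simp only [eval_C] at h2
      rw [h3, h2, map_zero] at hf0
      exact hf0 rfl
    simp [hz]
  -- choose a maximal pair
  obtain ⟨q, hqmem, hq⟩ := Finset.exists_max_image
    ((Finset.univ ×ˢ Finset.univ).filter fun q : Fin 5 × Fin 5 => q.1 ≠ q.2)
    (fun q => a q.1 + a q.2) ⟨((0 : Fin 5), (1 : Fin 5)), by simp⟩
  obtain ⟨i, j⟩ := q
  simp only [Finset.mem_filter] at hqmem
  have hij : i ≠ j := hqmem.2
  have hmax : ∀ u v : Fin 5, u ≠ v → a u + a v ≤ a i + a j := by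
    intro u v huv
    exact hq (u, v) (by simp [huv])
  set vi := (p i).rep with hvi
  set vj := (p j).rep with hvj
  set Mπ : Matrix (Fin 3) (Fin 3) k := Matrix.of (fun l t => ![vi l, vj l, 0] t) with hMπ
  have hMπ2 : ∀ l, Mπ l 2 = 0 := fun l => rfl
  have hMπ0 : Mπ.mulVec (Pi.single 0 1) = vi := by
    funext l
    simp [hMπ, Matrix.mulVec, dotProduct, Fin.sum_univ_three]
  have hMπ1 : Mπ.mulVec (Pi.single 1 1) = vj := by
    funext l
    simp [hMπ, Matrix.mulVec, dotProduct, Fin.sum_univ_three]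
  by_cases hπ : subst Mπ f = 0
  · -- the line through `p i` and `p j` divides `f`
    obtain ⟨M, N, hMN, hNM, hM0, hM1⟩ := exists_frame (rep_pair_indep (hp.ne hij))
    have hπτ : subst Mπ f = subst Tmat (subst M f) := by
      apply MvPolynomial.funext
      intro u
      have hvv : (![u 0, u 1, 0] : Fin 3 → k)
          = u 0 • (Pi.single 0 1 : Fin 3 → k) + u 1 • (Pi.single 1 1 : Fin 3 → k) := by
        funext l
        fin_cases l <;> simp
      have hveq : Mπ.mulVec u = M.mulVec (Tmat.mulVec u) := by
        rw [Tmat_mulVec, hvv, Matrix.mulVec_add, Matrix.mulVec_smul, Matrix.mulVec_smul,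
          hM0, hM1]
        funext l
        simp only [hMπ, hvi, hvj, Matrix.mulVec, dotProduct, Fin.sum_univ_three,
          Matrix.of_apply, Matrix.cons_val_zero, Matrix.cons_val_one, Matrix.head_cons,
          Matrix.cons_val_two, Matrix.tail_cons, Pi.add_apply, Pi.smul_apply, smul_eq_mul]
        ring
      rw [eval_subst, eval_subst, eval_subst, hveq]
    have hX2dvd : subst M f ∈ Ideal.span {(X 2 : MvPolynomial (Fin 3) k)} := by
      have h5 := sub_Tmat_mem (subst M f)
      rwa [← hπτ, hπ, sub_zero] at h5
    obtain ⟨G, hG⟩ := Ideal.mem_span_singleton.1 hX2dvd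
    have hφf0 : subst M f ≠ 0 := subst_ne_zero hMN hf0
    have hG0 : G ≠ 0 := by
      rintro rfl
      rw [mul_zero] at hG
      exact hφf0 hG
    obtain ⟨e, rfl⟩ : ∃ e, d = e + 1 := ⟨d - 1, by omega⟩
    have hφfh : (subst M f).IsHomogeneous (e + 1) := subst_homog M hfh
    have hGh : G.IsHomogeneous e := by
      rw [isHomog_iff]
      intro s hsne
      have hcoeff : coeff (Finsupp.single 2 1 + s) (subst M f) ≠ 0 := by
        rw [hG, coeff_X_mul]
        exact hsne
      have h5 := isHomog_iff.1 hφfh (Finsupp.single 2 1 + s) hcoeff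
      rw [Finsupp.add_apply, Finsupp.add_apply, Finsupp.add_apply,
        Finsupp.single_eq_of_ne' (show (2 : Fin 3) ≠ 0 by decide),
        Finsupp.single_eq_of_ne' (show (2 : Fin 3) ≠ 1 by decide),
        Finsupp.single_eq_same] at h5
      omega
    set L := subst N (X 2) with hLdef
    set g := subst N G with hgdef
    have hfLg : f = L * g := by
      rw [hLdef, hgdef, ← map_mul, ← hG, subst_subst M N hMN]
    have hLhom : L.IsHomogeneous 1 := subst_homog N (isHomogeneous_X _ _)
    have hgh : g.IsHomogeneous e := subst_homog N hGh
    have hL0 : L ≠ 0 := subst_ne_zero hNM (MvPolynomial.X_ne_zero 2)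
    have hg0 : g ≠ 0 := subst_ne_zero hNM hG0
    have hLvi : eval vi L = 0 := by
      rw [hLdef, eval_subst, hvi, ← hM0, hNM, eval_X]
      simp
    have hLvj : eval vj L = 0 := by
      rw [hLdef, eval_subst, hvj, ← hM1, hNM, eval_X]
      simp
    have hga : ∀ u : Fin 5, g ∈ pointIdeal (p u) ^ (if u = i ∨ u = j then a u - 1 else a u) := by
      intro u
      obtain ⟨Mu, Nu, hMNu, hNMu, hMu0⟩ := exists_frame_point (p u).rep (p u).rep_nonzero
      have hfd := (mem_pow_iff_degreeOf (p u) hMNu hNMu hMu0 hfh hf0 (a u)).1 (hfa u)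
      have hLu0 : subst Mu L ≠ 0 := subst_ne_zero hMNu hL0
      have hgu0 : subst Mu g ≠ 0 := subst_ne_zero hMNu hg0
      have hadd : degreeOf 0 (subst Mu f)
          = degreeOf 0 (subst Mu L) + degreeOf 0 (subst Mu g) := by
        rw [hfLg, map_mul, degreeOf0_mul hLu0 hgu0]
      have hgle : degreeOf 0 (subst Mu g) ≤ e :=
        le_trans (degreeOf_le_totalDegree _ 0) (subst_homog Mu hgh).totalDegree_le
      by_cases hu : u = i ∨ u = j
      · rw [if_pos hu]
        refine (mem_pow_iff_degreeOf (p u) hMNu hNMu hMu0 hgh hg0 _).2 ?_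
        omega
      · rw [if_neg hu]
        push_neg at hu
        have hLu : eval (p u).rep L ≠ 0 := by
          intro h0
          refine hgen {i, j, u} ?_ ⟨L, hL0, hLhom, ?_⟩
          · have c1 : i ∉ ({j, u} : Finset (Fin 5)) := by
              simp [hij, Ne.symm hu.1]
            have c2 : j ∉ ({u} : Finset (Fin 5)) := by
              simp [Ne.symm hu.2]
            rw [Finset.card_insert_of_notMem c1, Finset.card_insert_of_notMem c2,
              Finset.card_singleton]
          · intro t ht
            simp only [Finset.mem_insert, Finset.mem_singleton] at ht
            rcases ht with rfl | rfl | rfl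
            · exact hLvi
            · exact hLvj
            · exact h0
        have hdeg1 : degreeOf 0 (subst Mu L) = 1 := by
          have hhom1 : (subst Mu L).IsHomogeneous 1 := subst_homog Mu hLhom
          have hle : degreeOf 0 (subst Mu L) ≤ 1 :=
            le_trans (degreeOf_le_totalDegree _ 0) hhom1.totalDegree_le
          have hco : coeff (Finsupp.single 0 1) (subst Mu L) ≠ 0 := by
            rw [← eval_single_homog hhom1 0, eval_subst, hMu0]
            exact hLu
          have hge : (Finsupp.single (0 : Fin 3) 1) 0 ≤ degreeOf 0 (subst Mu L) := by
            rw [degreeOf_eq_sup]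
            exact Finset.le_sup (f := fun t => t 0) (MvPolynomial.mem_support_iff.2 hco)
          simp only [Finsupp.single_eq_same] at hge
          omega
        refine (mem_pow_iff_degreeOf (p u) hMNu hNMu hMu0 hgh hg0 _).2 ?_
        omega
    have hIH := IH e (by omega) g hg0 hgh _ hga
    have hsum2 : ∑ u : Fin 5, (if u = i ∨ u = j then (1:ℕ) else 0) = 2 := by
      have hrw : ∀ u : Fin 5, (if u = i ∨ u = j then (1:ℕ) else 0)
          = if u ∈ ({i, j} : Finset (Fin 5)) then 1 else 0 := by
        intro u
        simp [Finset.mem_insert]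
      rw [Finset.sum_congr rfl fun u _ => hrw u, Finset.sum_ite_mem, Finset.univ_inter,
        Finset.sum_const, Finset.card_insert_of_notMem (by simp [hij]), Finset.card_singleton]
      simp
    have hsum : ∑ u, a u ≤ (∑ u, if u = i ∨ u = j then a u - 1 else a u) + 2 := by
      have h1 : ∀ u : Fin 5, a u ≤ (if u = i ∨ u = j then a u - 1 else a u)
          + (if u = i ∨ u = j then 1 else 0) := by
        intro u
        by_cases h : u = i ∨ u = j <;> simp [h] <;> omega
      calc ∑ u, a u
          ≤ ∑ u : Fin 5, ((if u = i ∨ u = j then a u - 1 else a u)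
            + (if u = i ∨ u = j then 1 else 0)) := Finset.sum_le_sum (fun u _ => h1 u)
        _ = (∑ u, if u = i ∨ u = j then a u - 1 else a u) + 2 := by
            rw [Finset.sum_add_distrib, hsum2]
    omega
  · -- the restriction to the line is nonzero
    have hKi := subst_mem_K Mπ (p i) 0 hMπ0 (hfa i)
    have hKj := subst_mem_K Mπ (p j) 1 hMπ1 (hfa j)
    obtain ⟨s, hs⟩ := MvPolynomial.support_nonempty.2 hπ
    have h1 : a i ≤ s 1 + s 2 := by
      have := hKi s hs
      rwa [sum_wI_zero] at this
    have h2 : a j ≤ s 0 + s 2 := by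
      have := hKj s hs
      rwa [sum_wI_one] at this
    have h3 : s 2 = 0 := supp_subst_col2 Mπ hMπ2 f s hs
    have h4 : s 0 + s 1 + s 2 = d :=
      isHomog_iff.1 (subst_homog Mπ hfh) s (MvPolynomial.mem_support_iff.1 hs)
    have hd2 : a i + a j ≤ d := by omega
    have hne5 : ∀ u : Fin 5, u ≠ u + 1 := by decide
    have hcyc : ∑ u : Fin 5, a (u + 1) = ∑ u, a u :=
      Fintype.sum_equiv (Equiv.addRight 1) _ _ (fun u => rfl)
    have hstep : 2 * ∑ u, a u = ∑ u : Fin 5, (a u + a (u + 1)) := by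
      rw [Finset.sum_add_distrib, hcyc]
      ring
    calc 2 * ∑ u, a u = ∑ u : Fin 5, (a u + a (u + 1)) := hstep
      _ ≤ ∑ _u : Fin 5, (a i + a j) :=
          Finset.sum_le_sum (fun u _ => hmax u (u + 1) (hne5 u))
      _ = 5 * (a i + a j) := by
          rw [Finset.sum_const]
          simp [mul_comm]
      _ ≤ 5 * d := by omega

end FiveGen

open FiveGen in
/-- For five distinct points of `ℙ²(k)` with no three collinear and every `m ≥ 1`, the
least degree of a nonzero homogeneous form lying in `⋂ᵢ I(pᵢ)ᵐ` is exactly `2m`: such a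
form of degree `2m` exists, and every nonzero homogeneous form in `⋂ᵢ I(pᵢ)ᵐ` has degree
at least `2m`. -/
theorem least_degree_five_general_points
    (k : Type*) [Field k] [IsAlgClosed k] [CharZero k]
    (p : Fin 5 → Projectivization k (Fin 3 → k))
    (hp : Function.Injective p)
    (hgen : ∀ s : Finset (Fin 5), s.card = 3 →
      ¬ ∃ L : MvPolynomial (Fin 3) k, L ≠ 0 ∧ L.IsHomogeneous 1 ∧
        ∀ i ∈ s, eval (p i).rep L = 0)
    (m : ℕ) (hm : 1 ≤ m) :
    (∃ f : MvPolynomial (Fin 3) k, f ≠ 0 ∧ f.IsHomogeneous (2 * m) ∧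
      ∀ i, f ∈ pointIdeal (p i) ^ m) ∧
    (∀ (d : ℕ) (f : MvPolynomial (Fin 3) k), f ≠ 0 → f.IsHomogeneous d →
      (∀ i, f ∈ pointIdeal (p i) ^ m) → 2 * m ≤ d) := by
  classical
  haveI : Infinite k := Infinite.of_injective (Nat.cast : ℕ → k) Nat.cast_injective
  constructor
  · -- existence of the conic (to the m-th power)
    set e6 : Fin 6 → (Fin 3 → ℕ) :=
      ![![2,0,0], ![0,2,0], ![0,0,2], ![1,1,0], ![1,0,1], ![0,1,1]] with he6
    set E : Fin 6 → (Fin 3 →₀ ℕ) := fun j => Finsupp.equivFunOnFinite.symm (e6 j) with hE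
    have hEinj : Function.Injective E :=
      Finsupp.equivFunOnFinite.symm.injective.comp (show Function.Injective e6 by decide)
    set Nm : Matrix (Fin 5) (Fin 6) k :=
      Matrix.of (fun i j => ∏ l, (p i).rep l ^ e6 j l) with hNm
    have hni : ¬ Function.Injective Nm.mulVecLin := by
      intro hinj
      have hle := LinearMap.finrank_le_finrank_of_injective hinj
      rw [Module.finrank_fintype_fun_eq_card, Module.finrank_fintype_fun_eq_card,
        Fintype.card_fin, Fintype.card_fin] at hle
      omega
    obtain ⟨x, y, hxy, hne⟩ := Function.not_injective_iff.1 hni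
    set c : Fin 6 → k := x - y with hc
    have hcne : c ≠ 0 := sub_ne_zero.2 hne
    have hc0 : Nm.mulVec c = 0 := by
      have : Nm.mulVecLin c = 0 := by
        rw [hc, map_sub, hxy, sub_self]
      rwa [Matrix.mulVecLin_apply] at this
    set Cq : MvPolynomial (Fin 3) k := ∑ j, monomial (E j) (c j) with hCq
    have hcoeff : ∀ j0, coeff (E j0) Cq = c j0 := by
      intro j0
      rw [hCq, coeff_sum]
      rw [Finset.sum_eq_single j0]
      · rw [coeff_monomial, if_pos rfl]
      · intro b _ hb
        rw [coeff_monomial, if_neg (fun h => hb (hEinj h))]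
      · intro h
        exact absurd (Finset.mem_univ _) h
    have hC0 : Cq ≠ 0 := by
      obtain ⟨j0, hj0⟩ : ∃ j0, c j0 ≠ 0 := by
        by_contra hall
        push_neg at hall
        exact hcne (funext hall)
      intro h0
      exact hj0 (by rw [← hcoeff j0, h0, coeff_zero])
    have hChom : Cq.IsHomogeneous 2 := by
      rw [hCq]
      refine MvPolynomial.IsHomogeneous.sum _ _ _ (fun j _ => ?_)
      refine isHomogeneous_monomial _ ?_
      rw [Finsupp.degree_eq_weight_one, show (fun _ : Fin 3 => (1:ℕ)) = 1 from rfl, weight_one_eq]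
      have hl : ∀ l, E j l = e6 j l := fun l => rfl
      rw [hl 0, hl 1, hl 2]
      fin_cases j <;> rfl
    have hCvan : ∀ i, eval (p i).rep Cq = 0 := by
      intro i
      have h1 : eval (p i).rep Cq = ∑ j, (∏ l, (p i).rep l ^ e6 j l) * c j := by
        rw [hCq, map_sum]
        refine Finset.sum_congr rfl (fun j _ => ?_)
        rw [eval_monomial, Finsupp.prod_fintype _ _ (fun l => pow_zero _)]
        have hl : ∀ l, E j l = e6 j l := fun l => rfl
        rw [mul_comm]
        congr 1
      rw [h1]
      have h2 := congrFun hc0 i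
      simpa [hNm, Matrix.mulVec, dotProduct] using h2
    have hCmem : ∀ i, Cq ∈ pointIdeal (p i) :=
      fun i => Ideal.subset_span ⟨⟨2, hChom⟩, hCvan i⟩
    exact ⟨Cq ^ m, pow_ne_zero m hC0, hChom.pow m,
      fun i => Ideal.pow_mem_pow (hCmem i) m⟩
  · intro d f hf0 hfh hmem
    have hkey := key p hp hgen d f hf0 hfh (fun _ => m) (fun u => hmem u)
    have hsum : (∑ _u : Fin 5, m) = 5 * m := by
      rw [Finset.sum_const, Finset.card_univ, Fintype.card_fin]
      simp [mul_comm]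
    rw [hsum] at hkey
    omega
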